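/- Let α, σ, γ, δ ∈ ℝ with α² + σ² > 0, set κ = √(α² + σ²) and D = [(γ−δ)² + κ²]·[(γ+δ)² + κ²], and define υ : ℝ → ℝ by υ(z) = −(1/D)·[ 2γδ·sin(γz)·sin(δz) + (κ² + γ² + δ²)·cos(γz)·cos(δz) + ( γ·sin γ·cos δ·(κ² + γ² − δ²) + δ·cos γ·sin δ·(κ² − γ² + δ²) )/( κ·sinh κ ) · cosh(κz) ]. Then υ''(z) − κ²·υ(z) = cos(γz)·cos(δz) for all z ∈ ℝ, and υ'(1) = υ'(−1) = 0. -/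

import Mathlib

open Real

private lemma aux_cm (c z : ℝ) : HasDerivAt (fun z : ℝ => c * z) c z := by
  simpa using (hasDerivAt_id z).const_mul c

private lemma aux1 (P Q R γ δ κ z : ℝ) :
    HasDerivAt (fun z => P * (Real.sin (γ*z) * Real.sin (δ*z))
        + Q * (Real.cos (γ*z) * Real.cos (δ*z)) + R * Real.cosh (κ*z))
      (P * (γ * Real.cos (γ*z) * Real.sin (δ*z) + δ * Real.sin (γ*z) * Real.cos (δ*z))
        + Q * (-(γ * Real.sin (γ*z) * Real.cos (δ*z)) - δ * Real.cos (γ*z) * Real.sin (δ*z))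
        + R * (κ * Real.sinh (κ*z))) z := by
  have hγ := aux_cm γ z
  have hδ := aux_cm δ z
  have hκ := aux_cm κ z
  have := (((hγ.sin.mul hδ.sin).const_mul P).add
    ((hγ.cos.mul hδ.cos).const_mul Q)).add (hκ.cosh.const_mul R)
  exact this.congr_deriv (by ring)

private lemma aux2 (P Q R γ δ κ z : ℝ) :
    HasDerivAt (fun z => P * (γ * Real.cos (γ*z) * Real.sin (δ*z) + δ * Real.sin (γ*z) * Real.cos (δ*z))
        + Q * (-(γ * Real.sin (γ*z) * Real.cos (δ*z)) - δ * Real.cos (γ*z) * Real.sin (δ*z))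
        + R * (κ * Real.sinh (κ*z)))
      (P * (2*γ*δ * (Real.cos (γ*z) * Real.cos (δ*z)) - (γ^2+δ^2) * (Real.sin (γ*z) * Real.sin (δ*z)))
        + Q * (2*γ*δ * (Real.sin (γ*z) * Real.sin (δ*z)) - (γ^2+δ^2) * (Real.cos (γ*z) * Real.cos (δ*z)))
        + R * (κ^2 * Real.cosh (κ*z))) z := by
  have hγ := aux_cm γ z
  have hδ := aux_cm δ z
  have hκ := aux_cm κ z
  have t1 := (((hγ.cos.const_mul γ).mul hδ.sin).add ((hγ.sin.const_mul δ).mul hδ.cos)).const_mul P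
  have t2 := ((((hγ.sin.const_mul γ).mul hδ.cos).neg).sub ((hγ.cos.const_mul δ).mul hδ.sin)).const_mul Q
  have t3 := (hκ.sinh.const_mul κ).const_mul R
  have := (t1.add t2).add t3
  exact this.congr_deriv (by ring)

/-- The explicit function υ solves the Neumann problem
υ'' − κ²υ = cos(γz)cos(δz) on ℝ with υ'(±1) = 0, where κ = √(α² + σ²). -/
theorem stmt_18 (α σ γ δ : ℝ) (h : 0 < α ^ 2 + σ ^ 2)
    (κ D : ℝ) (hκ : κ = Real.sqrt (α ^ 2 + σ ^ 2))
    (hD : D = ((γ - δ) ^ 2 + κ ^ 2) * ((γ + δ) ^ 2 + κ ^ 2))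
    (υ : ℝ → ℝ)
    (hυ : ∀ z : ℝ, υ z = -(1 / D) *
      (2 * γ * δ * Real.sin (γ * z) * Real.sin (δ * z)
        + (κ ^ 2 + γ ^ 2 + δ ^ 2) * Real.cos (γ * z) * Real.cos (δ * z)
        + (γ * Real.sin γ * Real.cos δ * (κ ^ 2 + γ ^ 2 - δ ^ 2)
            + δ * Real.cos γ * Real.sin δ * (κ ^ 2 - γ ^ 2 + δ ^ 2))
          / (κ * Real.sinh κ) * Real.cosh (κ * z))) :
    (∀ z : ℝ, deriv (deriv υ) z - κ ^ 2 * υ z = Real.cos (γ * z) * Real.cos (δ * z)) ∧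
    deriv υ 1 = 0 ∧ deriv υ (-1) = 0 := by
  have hκpos : 0 < κ := hκ ▸ Real.sqrt_pos.mpr h
  have hκ2 : 0 < κ ^ 2 := by positivity
  have hDpos : 0 < D := by rw [hD]; positivity
  have hDne : D ≠ 0 := ne_of_gt hDpos
  have hsinh : 0 < Real.sinh κ := Real.sinh_pos_iff.mpr hκpos
  have hks : κ * Real.sinh κ ≠ 0 := by positivity
  set N : ℝ := γ * Real.sin γ * Real.cos δ * (κ ^ 2 + γ ^ 2 - δ ^ 2)
            + δ * Real.cos γ * Real.sin δ * (κ ^ 2 - γ ^ 2 + δ ^ 2) with hN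
  set P : ℝ := -(1 / D) * (2 * γ * δ) with hP
  set Q : ℝ := -(1 / D) * (κ ^ 2 + γ ^ 2 + δ ^ 2) with hQ
  set R : ℝ := -(1 / D) * (N / (κ * Real.sinh κ)) with hR
  have hfun : υ = fun z => P * (Real.sin (γ*z) * Real.sin (δ*z))
      + Q * (Real.cos (γ*z) * Real.cos (δ*z)) + R * Real.cosh (κ*z) := by
    funext z
    rw [hυ z, hP, hQ, hR]
    ring
  have hd1 : deriv υ = fun z =>
      P * (γ * Real.cos (γ*z) * Real.sin (δ*z) + δ * Real.sin (γ*z) * Real.cos (δ*z))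
        + Q * (-(γ * Real.sin (γ*z) * Real.cos (δ*z)) - δ * Real.cos (γ*z) * Real.sin (δ*z))
        + R * (κ * Real.sinh (κ*z)) := by
    funext z
    rw [hfun]
    exact (aux1 P Q R γ δ κ z).deriv
  have hd2 : ∀ z, deriv (deriv υ) z =
      P * (2*γ*δ * (Real.cos (γ*z) * Real.cos (δ*z)) - (γ^2+δ^2) * (Real.sin (γ*z) * Real.sin (δ*z)))
        + Q * (2*γ*δ * (Real.sin (γ*z) * Real.sin (δ*z)) - (γ^2+δ^2) * (Real.cos (γ*z) * Real.cos (δ*z)))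
        + R * (κ^2 * Real.cosh (κ*z)) := by
    intro z
    rw [hd1]
    exact (aux2 P Q R γ δ κ z).deriv
  refine ⟨fun z => ?_, ?_, ?_⟩
  · rw [hd2 z, hυ z]
    rw [hP, hQ, hR]
    field_simp
    rw [hD]
    ring
  · rw [hd1]
    simp only [mul_one]
    rw [hP, hQ, hR, hN]
    field_simp
    ring
  · rw [hd1]
    simp only [mul_neg, mul_one, Real.sin_neg, Real.cos_neg, Real.sinh_neg]
    rw [hP, hQ, hR, hN]
    field_simp
    ring
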